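/- Let d > 1, ω = e^(2πi/d), β ∈ ℂ, and let U_γ denote the Weyl operator (U_γ f)(z) = e^{−|γ|²/2 − conj(γ)z} f(z+γ). Suppose h is an entire function whose Taylor coefficients a_j vanish for all j not divisible by d (so h(ωz) = h(z)), and suppose P₀(U_{−β} h) = 0, where P₀ g(z) = (1/d) Σ_{m=0}^{d−1} g(ω^m z). Then Σ_{m=0}^{d−1} (U_{−βω^{−m}} h)(z) = 0 for all z ∈ ℂ. -/

import Mathlib

open Complex

noncomputable def WeylOp (β : ℂ) (f : ℂ → ℂ) : ℂ → ℂ :=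
  fun z => Complex.exp (-((‖β‖ : ℂ) ^ 2) / 2 - (starRingEnd ℂ) β * z) * f (z + β)

theorem weyl_sum_vanishes (d : ℕ) (hd : 1 < d) (ω : ℂ)
    (hω : ω = Complex.exp (2 * Real.pi * I / d)) (β : ℂ)
    (h : ℂ → ℂ) (hent : Differentiable ℂ h)
    (hinv : ∀ z : ℂ, h (ω * z) = h z)
    (hP0 : ∀ z : ℂ, (d : ℂ)⁻¹ * ∑ m ∈ Finset.range d, WeylOp (-β) h (ω ^ m * z) = 0) :
    ∀ z : ℂ, ∑ m ∈ Finset.range d, WeylOp (-β * ω ^ (-(m : ℤ))) h z = 0 := by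
  intro z
  have hω0 : ω ≠ 0 := by rw [hω]; exact Complex.exp_ne_zero _
  have hωabs : ‖ω‖ = 1 := by
    rw [hω, Complex.norm_exp]
    have : (2 * Real.pi * I / d).re = 0 := by
      simp [Complex.div_re]
    rw [this, Real.exp_zero]
  have hconj : (starRingEnd ℂ) ω = ω⁻¹ := by
    have h1 : ω * (starRingEnd ℂ) ω = 1 := by
      rw [Complex.mul_conj]
      norm_cast
      rw [Complex.normSq_eq_norm_sq, hωabs]; norm_num
    field_simp
    linear_combination h1
  have hinvm : ∀ m : ℕ, ∀ w : ℂ, h (ω ^ m * w) = h w := by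
    intro m
    induction m with
    | zero => intro w; simp
    | succ n ih =>
      intro w
      have : ω ^ (n + 1) * w = ω ^ n * (ω * w) := by ring
      rw [this, ih, hinv]
  have key : ∀ m : ℕ, WeylOp (-β * ω ^ (-(m : ℤ))) h z = WeylOp (-β) h (ω ^ m * z) := by
    intro m
    have hc : (starRingEnd ℂ) (ω ^ (-(m : ℤ))) = ω ^ m := by
      rw [map_zpow₀, hconj, inv_zpow, zpow_neg, inv_inv, zpow_natCast]
    have hpow1 : (ω : ℂ) ^ m * ω ^ (-(m : ℤ)) = 1 := by
      rw [← zpow_natCast ω m, ← zpow_add₀ hω0]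
      simp
    have hn : ‖(-β * ω ^ (-(m : ℤ)))‖ = ‖(-β)‖ := by
      rw [norm_mul, norm_zpow, hωabs]; simp
    have harg : h (z + -β * ω ^ (-(m : ℤ))) = h (ω ^ m * z + -β) := by
      rw [← hinvm m (z + -β * ω ^ (-(m : ℤ)))]
      congr 1
      have : ω ^ m * (z + -β * ω ^ (-(m : ℤ))) = ω ^ m * z + -β * (ω ^ m * ω ^ (-(m : ℤ))) := by
        ring
      rw [this, hpow1, mul_one]
    simp only [WeylOp, hn, harg]
    congr 1
    rw [map_mul, hc]
    ring_nf
  have hsum : ∑ m ∈ Finset.range d, WeylOp (-β * ω ^ (-(m : ℤ))) h z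
      = ∑ m ∈ Finset.range d, WeylOp (-β) h (ω ^ m * z) :=
    Finset.sum_congr rfl fun m _ => key m
  have hd0 : (d : ℂ) ≠ 0 := Nat.cast_ne_zero.mpr (by omega)
  have := hP0 z
  rw [hsum]
  field_simp at this
  exact this.trans (mul_zero _)
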